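/- Let P = Σ_{i=1}^m A_i X^i be a polynomial over FDDS without constant term, and let M be the monomial (A_1 ⊕ A_2 ⊕ ⋯ ⊕ A_m) X whose coefficient is the sum of all the coefficients of P. Then P is injective up to isomorphism (for all FDDS X, Y, P(X) ≅ P(Y) implies X ≅ Y) if and only if M is injective up to isomorphism. -/

import Mathlib

/-- Isomorphism of finite dynamical systems: a bijection commuting with the maps. -/
def FddsIso {α β : Type} (f : α → α) (g : β → β) : Prop :=
  ∃ e : α ≃ β, ⇑e ∘ f = g ∘ ⇑e

/-- A state is periodic if some positive iterate fixes it. -/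
def IsPeriodicState {α : Type} (f : α → α) (x : α) : Prop :=
  ∃ n > 0, f^[n] x = x

/-- The vertex set of the unroll of `(α, f)`. -/
def UnrollSet {α : Type} (f : α → α) : Set (α × ℕ) :=
  {p | IsPeriodicState f (f^[p.2] p.1)}

/-- The parent map of the unroll. -/
def unrollMap {α : Type} (f : α → α) (q : UnrollSet f) : UnrollSet f :=
  if h : q.1.2 = 0 then q
  else ⟨(f q.1.1, q.1.2 - 1), by
    obtain ⟨⟨x, k⟩, hq⟩ := q
    simp only at h
    obtain ⟨k', rfl⟩ := Nat.exists_eq_succ_of_ne_zero h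
    simpa [UnrollSet, Function.iterate_succ_apply] using hq⟩

/-- Isomorphism of unrolls. -/
def UnrollIso {α β : Type} (f : α → α) (g : β → β) : Prop :=
  ∃ φ : UnrollSet f ≃ UnrollSet g, ⇑φ ∘ unrollMap f = unrollMap g ∘ ⇑φ

/-- Vertices of the cut at depth `n` of the unroll. -/
def CutSet {α : Type} (f : α → α) (n : ℕ) : Set (α × ℕ) :=
  {p | p ∈ UnrollSet f ∧ p.2 ≤ n}

/-- The parent map of the cut at depth `n`. -/
def cutMap {α : Type} (f : α → α) (n : ℕ) (q : CutSet f n) : CutSet f n :=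
  if h : q.1.2 = 0 then q
  else ⟨(f q.1.1, q.1.2 - 1), by
    obtain ⟨⟨x, k⟩, hq⟩ := q
    obtain ⟨hq1, hq2⟩ := hq
    simp only at h hq2 ⊢
    obtain ⟨k', rfl⟩ := Nat.exists_eq_succ_of_ne_zero h
    refine ⟨by simpa [UnrollSet, Function.iterate_succ_apply] using hq1, by omega⟩⟩

/-- Isomorphism of cuts at depth `n`. -/
def CutIso {α β : Type} (f : α → α) (g : β → β) (n : ℕ) : Prop :=
  ∃ φ : CutSet f n ≃ CutSet g n, ⇑φ ∘ cutMap f n = cutMap g n ∘ ⇑φ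

/-- The states of the components whose cycle length divides `p`. -/
def DivSet {α : Type} (f : α → α) (p : ℕ) : Set α :=
  {x | ∃ N, f^[N + p] x = f^[N] x}

/-- The restriction of `f` to `DivSet f p`. -/
def divMap {α : Type} (f : α → α) (p : ℕ) (q : DivSet f p) : DivSet f p :=
  ⟨f q.1, by
    obtain ⟨x, N, hN⟩ := q
    exact ⟨N, by
      rw [← Function.iterate_succ_apply, ← Function.iterate_succ_apply,
        Function.iterate_succ_apply', Function.iterate_succ_apply', hN]⟩⟩

/-- `k`-th power of an FDDS: map on `Fin k → α`. -/
def powMap {α : Type} (f : α → α) (k : ℕ) (v : Fin k → α) : Fin k → α := f ∘ v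

/-- Evaluation of the polynomial `Σ_{i=0}^m A_i X^i` at `(α, f)`. -/
def polyEval {m : ℕ} {γ : Fin (m + 1) → Type} (g : ∀ i, γ i → γ i)
    {α : Type} (f : α → α)
    (x : Σ i : Fin (m + 1), γ i × (Fin i.val → α)) :
    Σ i : Fin (m + 1), γ i × (Fin i.val → α) :=
  ⟨x.1, g x.1 x.2.1, f ∘ x.2.2⟩

/-- Evaluation of the constant-free polynomial `Σ_{i=1}^m A_i X^i` at `(α, f)`. -/
def polyEvalNC {m : ℕ} {γ : Fin m → Type} (g : ∀ i, γ i → γ i)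
    {α : Type} (f : α → α)
    (x : Σ i : Fin m, γ i × (Fin (i.val + 1) → α)) :
    Σ i : Fin m, γ i × (Fin (i.val + 1) → α) :=
  ⟨x.1, g x.1 x.2.1, f ∘ x.2.2⟩

/-- An FDDS is cancelable if it can be canceled from products. -/
def Cancelable {α : Type} (f : α → α) : Prop :=
  ∀ (β γ : Type) [Fintype β] [Fintype γ] (g : β → β) (h : γ → γ),
    FddsIso (Prod.map f g) (Prod.map f h) → FddsIso g h

/-- The sum `A_1 ⊕ ⋯ ⊕ A_m` of the coefficients of a constant-free polynomial. -/
def sumCoeffMap {m : ℕ} {γ : Fin m → Type} (g : ∀ i, γ i → γ i)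
    (q : Σ i : Fin m, γ i) : Σ i : Fin m, γ i :=
  ⟨q.1, g q.1 q.2⟩


section LovaszAux

/-- Homomorphisms between dynamical systems. -/
abbrev FHom {ζ α : Type} (z : ζ → ζ) (f : α → α) : Type :=
  {h : ζ → α // ∀ t, h (z t) = f (h t)}

/-- Injective homomorphisms. -/
abbrev FInj {ζ α : Type} (z : ζ → ζ) (f : α → α) : Type :=
  {h : FHom z f // Function.Injective h.1}

lemma fhom_iterate {ζ α : Type} {z : ζ → ζ} {f : α → α} (h : FHom z f) (n : ℕ) (t : ζ) :
    h.1 (z^[n] t) = f^[n] (h.1 t) := by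
  induction n generalizing t with
  | zero => rfl
  | succ n ih =>
    rw [Function.iterate_succ_apply, Function.iterate_succ_apply, ih, h.2]

/-- Transport of hom-counts along an isomorphism of targets. -/
lemma fhom_card_congr_target {ζ α β : Type} (z : ζ → ζ) {f : α → α} {g : β → β}
    (hiso : FddsIso f g) : Nat.card (FHom z f) = Nat.card (FHom z g) := by
  obtain ⟨e, he⟩ := hiso
  have he' : ∀ x, e (f x) = g (e x) := fun x => congrFun he x
  have he'' : ∀ y, e.symm (g y) = f (e.symm y) := by
    intro y
    apply e.injective
    rw [he', e.apply_symm_apply, e.apply_symm_apply]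
  exact Nat.card_congr
    { toFun := fun h => ⟨fun t => e (h.1 t), fun t => by show e (h.1 (z t)) = g (e (h.1 t)); rw [h.2, he']⟩
      invFun := fun h => ⟨fun t => e.symm (h.1 t), fun t => by show e.symm (h.1 (z t)) = f (e.symm (h.1 t)); rw [h.2, he'']⟩
      left_inv := fun h => Subtype.ext (funext fun t => e.symm_apply_apply _)
      right_inv := fun h => Subtype.ext (funext fun t => e.apply_symm_apply _) }

/-- Product rule. -/
def fhomProdEquiv {ζ α β : Type} (z : ζ → ζ) (f : α → α) (g : β → β) :
    FHom z (Prod.map f g) ≃ FHom z f × FHom z g where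
  toFun h := (⟨fun t => (h.1 t).1, fun t => congrArg Prod.fst (h.2 t)⟩,
              ⟨fun t => (h.1 t).2, fun t => congrArg Prod.snd (h.2 t)⟩)
  invFun p := ⟨fun t => (p.1.1 t, p.2.1 t), fun t => Prod.ext (p.1.2 t) (p.2.2 t)⟩
  left_inv h := Subtype.ext (funext fun t => rfl)
  right_inv p := Prod.ext (Subtype.ext rfl) (Subtype.ext rfl)

/-- Power rule. -/
def fhomPowEquiv {ζ α : Type} (z : ζ → ζ) (f : α → α) (k : ℕ) :
    FHom z (powMap f k) ≃ (Fin k → FHom z f) where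
  toFun h := fun i => ⟨fun t => h.1 t i, fun t => congrFun (h.2 t) i⟩
  invFun H := ⟨fun t i => (H i).1 t, fun t => funext fun i => (H i).2 t⟩
  left_inv h := Subtype.ext rfl
  right_inv H := funext fun i => Subtype.ext rfl

end LovaszAux
section SigmaConn

open Function

/-- Fiber-preserving map on a sigma type. -/
def sigMap {I : Type} {δ : I → Type} (F : ∀ i, δ i → δ i) (x : Σ i, δ i) : Σ i, δ i :=
  ⟨x.1, F x.1 x.2⟩

lemma sigMap_iterate_fst {I : Type} {δ : I → Type} (F : ∀ i, δ i → δ i) (n : ℕ)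
    (x : Σ i, δ i) : ((sigMap F)^[n] x).1 = x.1 := by
  induction n generalizing x with
  | zero => rfl
  | succ n ih => rw [Function.iterate_succ_apply, ih]; rfl

lemma sigma_eq_of_fst {I : Type} {δ : I → Type} (x : Σ i, δ i) {j : I} (p : x.1 = j) :
    x = ⟨j, p ▸ x.2⟩ := by
  cases x; cases p; rfl

/-- A (nonempty) connected dynamical system. -/
def ConnectedSys {ζ : Type} (z : ζ → ζ) : Prop :=
  Nonempty ζ ∧ ∀ a b, ∃ m n, z^[m] a = z^[n] b

/-- Sigma rule: homomorphisms from a connected system into a fiber-preserving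
sigma system split along fibers. -/
noncomputable def fhomSigmaEquiv {ζ I : Type} {δ : I → Type} (z : ζ → ζ)
    (F : ∀ i, δ i → δ i) (hc : ConnectedSys z) :
    FHom z (sigMap F) ≃ Σ i, FHom z (F i) := by
  classical
  have a₀ : ζ := Classical.choice hc.1
  have hconn := hc.2
  have hΨ : Function.Bijective
      (fun p : Σ i, FHom z (F i) =>
        (⟨fun t => ⟨p.1, p.2.1 t⟩, fun t => by
          show (⟨p.1, p.2.1 (z t)⟩ : Σ i, δ i) = sigMap F ⟨p.1, p.2.1 t⟩
          show (⟨p.1, p.2.1 (z t)⟩ : Σ i, δ i) = ⟨p.1, F p.1 (p.2.1 t)⟩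
          rw [p.2.2 t]⟩ : FHom z (sigMap F))) := by
    constructor
    · rintro ⟨i, k⟩ ⟨j, l⟩ hkl
      have h1 : (fun t => (⟨i, k.1 t⟩ : Σ i, δ i)) = fun t => ⟨j, l.1 t⟩ :=
        congrArg Subtype.val hkl
      have hij : i = j := congrArg Sigma.fst (congrFun h1 a₀)
      subst hij
      have hk : k = l := Subtype.ext (funext fun t => sigma_mk_injective (congrFun h1 t))
      rw [hk]
    · intro h
      set i₀ := (h.1 a₀).1 with hi₀
      have hfst : ∀ t, (h.1 t).1 = i₀ := by
        intro t
        obtain ⟨m, n, hmn⟩ := hconn t a₀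
        have e1 : (h.1 (z^[m] t)).1 = (h.1 t).1 := by
          rw [fhom_iterate h m t, sigMap_iterate_fst]
        have e2 : (h.1 (z^[n] a₀)).1 = (h.1 a₀).1 := by
          rw [fhom_iterate h n a₀, sigMap_iterate_fst]
        rw [hi₀, ← e2, ← hmn, e1]
      refine ⟨⟨i₀, ⟨fun t => (hfst t) ▸ (h.1 t).2, ?_⟩⟩, ?_⟩
      · intro t
        have e1 : h.1 t = ⟨i₀, (hfst t) ▸ (h.1 t).2⟩ := sigma_eq_of_fst _ (hfst t)
        have e2 : h.1 (z t) = ⟨i₀, (hfst (z t)) ▸ (h.1 (z t)).2⟩ :=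
          sigma_eq_of_fst _ (hfst (z t))
        have e3 := h.2 t
        rw [e1, e2] at e3
        exact sigma_mk_injective e3
      · apply Subtype.ext
        exact funext fun t => (sigma_eq_of_fst _ (hfst t)).symm
  exact (Equiv.ofBijective _ hΨ).symm

end SigmaConn
section Components

open Function

variable {ζ : Type} (z : ζ → ζ)

/-- The connectivity setoid of a dynamical system. -/
def connSetoid : Setoid ζ where
  r a b := ∃ m n, z^[m] a = z^[n] b
  iseqv := by
    refine ⟨fun a => ⟨0, 0, rfl⟩, fun ⟨m, n, h⟩ => ⟨n, m, h.symm⟩, ?_⟩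
    rintro a b c ⟨m, n, h⟩ ⟨p, q, h'⟩
    refine ⟨p + m, n + q, ?_⟩
    rw [Function.iterate_add_apply, h, ← Function.iterate_add_apply, add_comm p n,
      Function.iterate_add_apply, h', ← Function.iterate_add_apply]

/-- A connected component. -/
def Comp (c : Quotient (connSetoid z)) : Type :=
  {t : ζ // Quotient.mk (connSetoid z) t = c}

instance [Finite ζ] (c : Quotient (connSetoid z)) : Finite (Comp z c) :=
  Subtype.finite

lemma comp_step (t : ζ) : Quotient.mk (connSetoid z) (z t) = Quotient.mk (connSetoid z) t :=
  Quotient.sound ⟨0, 1, by simp⟩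

/-- The restriction of the map to a component. -/
def compMap (c : Quotient (connSetoid z)) (t : Comp z c) : Comp z c :=
  ⟨z t.1, by rw [comp_step, t.2]⟩

lemma compMap_iterate (c : Quotient (connSetoid z)) (k : ℕ) (t : Comp z c) :
    ((compMap z c)^[k] t).1 = z^[k] t.1 := by
  induction k generalizing t with
  | zero => rfl
  | succ k ih =>
    rw [Function.iterate_succ_apply, Function.iterate_succ_apply, ih]; rfl

lemma compMap_connected (c : Quotient (connSetoid z)) : ConnectedSys (compMap z c) := by
  constructor
  · obtain ⟨t, ht⟩ := Quotient.exists_rep c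
    exact ⟨⟨t, ht⟩⟩
  · rintro ⟨a, ha⟩ ⟨b, hb⟩
    have : (connSetoid z) a b := Quotient.exact (ha.trans hb.symm)
    obtain ⟨m, n, h⟩ := this
    exact ⟨m, n, Subtype.ext ((compMap_iterate z c m ⟨a, ha⟩).trans (h.trans (compMap_iterate z c n ⟨b, hb⟩).symm))⟩

/-- Decomposition of homomorphisms along connected components of the source. -/
def fhomCompEquiv {α : Type} (f : α → α) :
    FHom z f ≃ ∀ c : Quotient (connSetoid z), FHom (compMap z c) f where
  toFun h := fun c => ⟨fun t => h.1 t.1, fun t => h.2 t.1⟩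
  invFun H := ⟨fun t => (H (Quotient.mk _ t)).1 ⟨t, rfl⟩, by
    intro t
    have key : ∀ (c c' : Quotient (connSetoid z)) (q : c = c') (u : Comp z c),
        (H c).1 u = (H c').1 ⟨u.1, q ▸ u.2⟩ := by
      rintro c c' rfl u; rfl
    have p : Quotient.mk (connSetoid z) (z t) = Quotient.mk (connSetoid z) t := comp_step z t
    have step := key _ _ p ⟨z t, rfl⟩
    show (H (Quotient.mk _ (z t))).1 ⟨z t, rfl⟩ = f ((H (Quotient.mk _ t)).1 ⟨t, rfl⟩)
    rw [step]
    have hom := (H (Quotient.mk (connSetoid z) t)).2 ⟨t, rfl⟩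
    have : (compMap z (Quotient.mk (connSetoid z) t) ⟨t, rfl⟩) =
        (⟨z t, p ▸ rfl⟩ : Comp z (Quotient.mk (connSetoid z) t)) := Subtype.ext rfl
    rw [this] at hom
    exact hom⟩
  left_inv h := Subtype.ext rfl
  right_inv H := by
    funext c
    apply Subtype.ext
    funext t
    obtain ⟨t, ht⟩ := t
    show (H (Quotient.mk _ t)).1 ⟨t, rfl⟩ = (H c).1 ⟨t, ht⟩
    cases ht
    rfl

end Components
section Lovasz

open Function

variable {ζ α : Type}

instance setoidFinite [Finite ζ] : Finite (Setoid ζ) :=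
  Finite.of_injective (fun s => ⇑s)
    (fun s t h => Setoid.ext fun a b => iff_of_eq (congrFun (congrFun h a) b))

/-- Congruences of a dynamical system. -/
def CongT (z : ζ → ζ) : Type := {s : Setoid ζ // ∀ a b, s a b → s (z a) (z b)}

instance [Finite ζ] (z : ζ → ζ) : Finite (CongT z) := Subtype.finite

noncomputable instance congTFintype [Finite ζ] (z : ζ → ζ) : Fintype (CongT z) :=
  Fintype.ofFinite _

/-- The quotient dynamical system. -/
def congMap (z : ζ → ζ) (s : CongT z) : Quotient s.1 → Quotient s.1 :=
  Quotient.map z (fun a b h => s.2 a b h)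

/-- The equality congruence. -/
def botCong (z : ζ → ζ) : CongT z :=
  ⟨⟨Eq, ⟨fun _ => rfl, Eq.symm, Eq.trans⟩⟩, fun _ _ h => congrArg z h⟩

lemma nat_card_sigma {I : Type} [Fintype I] (G : I → Type) [∀ i, Finite (G i)] :
    Nat.card (Σ i, G i) = ∑ i, Nat.card (G i) := by
  letI : ∀ i, Fintype (G i) := fun i => Fintype.ofFinite _
  rw [Nat.card_eq_fintype_card, Fintype.card_sigma]
  exact Finset.sum_congr rfl fun i _ => (Nat.card_eq_fintype_card).symm

/-- Factorization: every homomorphism is an injection from a quotient. -/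
lemma fhom_factor_card [Finite ζ] [Finite α] (z : ζ → ζ) (f : α → α) :
    Nat.card (FHom z f) = ∑ s : CongT z, Nat.card (FInj (congMap z s) f) := by
  classical
  have hΦ : Function.Bijective
      (fun p : Σ s : CongT z, FInj (congMap z s) f =>
        (⟨fun t => p.2.1.1 (Quotient.mk p.1.1 t), fun t => by
          show p.2.1.1 (Quotient.mk p.1.1 (z t)) = f (p.2.1.1 (Quotient.mk p.1.1 t))
          have : Quotient.mk p.1.1 (z t) = congMap z p.1 (Quotient.mk p.1.1 t) := rfl
          rw [this, p.2.1.2]⟩ : FHom z f)) := by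
    constructor
    · rintro ⟨s, k⟩ ⟨s', k'⟩ hkl
      have h1 : (fun t => k.1.1 (Quotient.mk s.1 t)) = fun t => k'.1.1 (Quotient.mk s'.1 t) :=
        congrArg Subtype.val hkl
      have hss : s = s' := by
        apply Subtype.ext
        apply Setoid.ext
        intro a b
        constructor
        · intro hab
          have : k.1.1 (Quotient.mk s.1 a) = k.1.1 (Quotient.mk s.1 b) := by
            rw [Quotient.sound hab]
          rw [congrFun h1 a, congrFun h1 b] at this
          exact Quotient.exact (k'.2 this)
        · intro hab
          have : k'.1.1 (Quotient.mk s'.1 a) = k'.1.1 (Quotient.mk s'.1 b) := by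
            rw [Quotient.sound hab]
          rw [← congrFun h1 a, ← congrFun h1 b] at this
          exact Quotient.exact (k.2 this)
      subst hss
      have hk : k = k' := by
        apply Subtype.ext
        apply Subtype.ext
        funext q
        induction q using Quotient.ind with
        | _ t => exact congrFun h1 t
      rw [hk]
    · intro h
      refine ⟨⟨⟨Setoid.ker h.1, fun a b hab => ?_⟩,
        ⟨⟨Quotient.lift h.1 (fun a b hab => hab), ?_⟩, ?_⟩⟩, ?_⟩
      · show h.1 (z a) = h.1 (z b)
        rw [h.2 a, h.2 b, hab]
      · intro q
        induction q using Quotient.ind with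
        | _ t => exact h.2 t
      · intro q q' hqq'
        induction q using Quotient.ind with
        | _ t =>
          induction q' using Quotient.ind with
          | _ t' => exact Quotient.sound hqq'
      · exact Subtype.ext rfl
  rw [Nat.card_congr (Equiv.ofBijective _ hΦ).symm]
  haveI : ∀ s : CongT z, Finite (Quotient s.1) := fun s => Quotient.finite s.1
  exact nat_card_sigma _

/-- Transport of injective-hom-counts along an isomorphism of sources. -/
def finjSourceEquiv {ζ' : Type} {z : ζ → ζ} {z' : ζ' → ζ'} {f : α → α}
    (e : ζ' ≃ ζ) (he : ∀ t, e (z' t) = z (e t)) : FInj z f ≃ FInj z' f where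
  toFun h := ⟨⟨fun t => h.1.1 (e t), fun t => by
      show h.1.1 (e (z' t)) = f (h.1.1 (e t))
      rw [he, h.1.2]⟩,
    fun a b hab => e.injective (h.2 hab)⟩
  invFun h := ⟨⟨fun t => h.1.1 (e.symm t), fun t => by
      show h.1.1 (e.symm (z t)) = f (h.1.1 (e.symm t))
      have : z t = e (z' (e.symm t)) := by rw [he, e.apply_symm_apply]
      rw [this, e.symm_apply_apply, h.1.2]⟩,
    fun a b hab => e.symm.injective (h.2 hab)⟩
  left_inv h := Subtype.ext (Subtype.ext (funext fun t => by
    show h.1.1 (e (e.symm t)) = h.1.1 t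
    rw [e.apply_symm_apply]))
  right_inv h := Subtype.ext (Subtype.ext (funext fun t => by
    show h.1.1 (e.symm (e t)) = h.1.1 t
    rw [e.symm_apply_apply]))

/-- The bottom congruence gives the original system. -/
lemma finj_bot_card [Finite α] (z : ζ → ζ) (f : α → α) :
    Nat.card (FInj (congMap z (botCong z)) f) = Nat.card (FInj z f) := by
  refine Nat.card_congr (finjSourceEquiv ?_ ?_).symm
  · exact ⟨Quotient.lift id (fun a b h => h), Quotient.mk _,
      fun q => by induction q using Quotient.ind with | _ t => rfl, fun t => rfl⟩
  · intro q
    induction q using Quotient.ind with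
    | _ t => rfl

end Lovasz
section LovaszMain

open Function

variable {α β : Type}

lemma finj_card_eq [Finite α] [Finite β] (f : α → α) (g : β → β)
    (H : ∀ (ζ : Type) [Fintype ζ] (z : ζ → ζ), Nat.card (FHom z f) = Nat.card (FHom z g)) :
    ∀ (ζ : Type) [Fintype ζ] (z : ζ → ζ), Nat.card (FInj z f) = Nat.card (FInj z g) := by
  suffices key : ∀ (n : ℕ) (ζ : Type) [Fintype ζ], Fintype.card ζ ≤ n →
      ∀ (z : ζ → ζ), Nat.card (FInj z f) = Nat.card (FInj z g) by
    intro ζ _ z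
    exact key (Fintype.card ζ) ζ le_rfl z
  intro n
  induction n with
  | zero =>
    intro ζ _ hcard z
    have hempty : IsEmpty ζ := Fintype.card_eq_zero_iff.mp (Nat.le_zero.mp hcard)
    have einj : ∀ (α' : Type) (f' : α' → α'), FInj z f' ≃ FHom z f' := fun α' f' =>
      Equiv.subtypeUnivEquiv (fun h a b _ => (hempty.false a).elim)
    rw [Nat.card_congr (einj α f), Nat.card_congr (einj β g)]
    exact H ζ z
  | succ n ih =>
    intro ζ _ hcard z
    classical
    have hf := fhom_factor_card z f
    have hg := fhom_factor_card z g
    rw [Finset.sum_eq_add_sum_sdiff_singleton_of_mem (Finset.mem_univ (botCong z))] at hf hg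
    rw [finj_bot_card] at hf hg
    have htail : ∑ s ∈ Finset.univ \ {botCong z}, Nat.card (FInj (congMap z s) f)
        = ∑ s ∈ Finset.univ \ {botCong z}, Nat.card (FInj (congMap z s) g) := by
      refine Finset.sum_congr rfl (fun s hs => ?_)
      have hsne : s ≠ botCong z :=
        Finset.notMem_singleton.mp (Finset.mem_sdiff.mp hs).2
      have hw : ∃ a b, s.1 a b ∧ a ≠ b := by
        by_contra hcon
        push_neg at hcon
        apply hsne
        apply Subtype.ext
        apply Setoid.ext
        intro a b
        exact ⟨fun hab => hcon a b hab, fun hab => hab ▸ s.1.refl a⟩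
      obtain ⟨a, b, hab, hne⟩ := hw
      letI : Fintype (Quotient s.1) := Fintype.ofFinite _
      have hlt : Fintype.card (Quotient s.1) < Fintype.card ζ := by
        refine Fintype.card_lt_of_surjective_not_injective (Quotient.mk s.1)
          (fun q => Quotient.exists_rep q) (fun hinj => hne (hinj ?_))
        exact Quotient.sound hab
      exact ih (Quotient s.1) (by omega) (congMap z s)
    have hH := H ζ z
    omega

theorem fddsIso_of_card_hom_eq [Finite α] [Finite β] (f : α → α) (g : β → β)
    (H : ∀ (ζ : Type) [Fintype ζ] (z : ζ → ζ), Nat.card (FHom z f) = Nat.card (FHom z g)) :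
    FddsIso f g := by
  letI : Fintype α := Fintype.ofFinite α
  letI : Fintype β := Fintype.ofFinite β
  have HIfg := finj_card_eq f g H α f
  have HIgf := finj_card_eq g f (fun ζ _ z => (H ζ z).symm) β g
  have hposf : 0 < Nat.card (FInj (z := f) f) :=
    @Nat.card_pos _ ⟨⟨⟨id, fun t => rfl⟩, fun a b h => h⟩⟩ _
  have hposg : 0 < Nat.card (FInj (z := g) g) :=
    @Nat.card_pos _ ⟨⟨⟨id, fun t => rfl⟩, fun a b h => h⟩⟩ _
  rw [HIfg] at hposf
  rw [HIgf] at hposg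
  obtain ⟨e⟩ := (Nat.card_pos_iff.mp hposf).1
  obtain ⟨u⟩ := (Nat.card_pos_iff.mp hposg).1
  have hcard : Fintype.card α = Fintype.card β :=
    le_antisymm (Fintype.card_le_of_injective e.1.1 e.2)
      (Fintype.card_le_of_injective u.1.1 u.2)
  have hbij : Function.Bijective e.1.1 :=
    (Fintype.bijective_iff_injective_and_card e.1.1).mpr ⟨e.2, hcard⟩
  exact ⟨Equiv.ofBijective e.1.1 hbij, funext fun t => e.1.2 t⟩

/-- Lovász-style characterization of isomorphism by homomorphism counts. -/
theorem fddsIso_iff_card_hom [Finite α] [Finite β] (f : α → α) (g : β → β) :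
    FddsIso f g ↔
      ∀ (ζ : Type) [Fintype ζ] (z : ζ → ζ), Nat.card (FHom z f) = Nat.card (FHom z g) :=
  ⟨fun hiso ζ _ z => fhom_card_congr_target z hiso, fddsIso_of_card_hom_eq f g⟩

end LovaszMain
section Bridge

open Function

variable {α β : Type}

lemma allZ_iff_conn [Finite α] [Finite β] (f : α → α) (g : β → β) :
    (∀ (ζ : Type) [Fintype ζ] (z : ζ → ζ), Nat.card (FHom z f) = Nat.card (FHom z g)) ↔
    (∀ (ζ : Type) [Fintype ζ] (z : ζ → ζ), ConnectedSys z →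
      Nat.card (FHom z f) = Nat.card (FHom z g)) := by
  constructor
  · intro h ζ _ z _
    exact h ζ z
  · intro h ζ _ z
    classical
    letI : Fintype (Quotient (connSetoid z)) := Fintype.ofFinite _
    rw [Nat.card_congr (fhomCompEquiv z f), Nat.card_congr (fhomCompEquiv z g),
      Nat.card_pi, Nat.card_pi]
    refine Finset.prod_congr rfl fun c _ => ?_
    letI : Fintype (Comp z c) := Fintype.ofFinite _
    exact h (Comp z c) (compMap z c) (compMap_connected z c)

lemma polyEvalNC_eq_sigMap {m : ℕ} {γ : Fin m → Type} (g : ∀ i, γ i → γ i) (f : α → α) :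
    polyEvalNC g f = sigMap (fun i : Fin m => Prod.map (g i) (powMap f (i.val + 1))) := by
  funext x
  rcases x with ⟨i, c, v⟩
  rfl

lemma sumCoeffMap_eq_sigMap {m : ℕ} {γ : Fin m → Type} (g : ∀ i, γ i → γ i) :
    sumCoeffMap g = sigMap g := by
  funext x
  rcases x with ⟨i, c⟩
  rfl

lemma card_hom_polyEvalNC {m : ℕ} {γ : Fin m → Type} [∀ i, Finite (γ i)]
    (g : ∀ i, γ i → γ i) [Finite α] (f : α → α)
    {ζ : Type} [Fintype ζ] (z : ζ → ζ) (hc : ConnectedSys z) :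
    Nat.card (FHom z (polyEvalNC g f)) =
      ∑ i : Fin m, Nat.card (FHom z (g i)) * Nat.card (FHom z f) ^ (i.val + 1) := by
  rw [polyEvalNC_eq_sigMap, Nat.card_congr (fhomSigmaEquiv z _ hc), nat_card_sigma]
  refine Finset.sum_congr rfl fun i _ => ?_
  rw [Nat.card_congr (fhomProdEquiv z _ _), Nat.card_prod,
    Nat.card_congr (fhomPowEquiv z f (i.val + 1)), Nat.card_fun,
    Nat.card_eq_fintype_card (α := Fin (i.val + 1)), Fintype.card_fin]

lemma card_hom_monomial {m : ℕ} {γ : Fin m → Type} [∀ i, Finite (γ i)]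
    (g : ∀ i, γ i → γ i) [Finite α] (f : α → α)
    {ζ : Type} [Fintype ζ] (z : ζ → ζ) (hc : ConnectedSys z) :
    Nat.card (FHom z (Prod.map (sumCoeffMap g) f)) =
      (∑ i : Fin m, Nat.card (FHom z (g i))) * Nat.card (FHom z f) := by
  rw [Nat.card_congr (fhomProdEquiv z _ _), Nat.card_prod, sumCoeffMap_eq_sigMap,
    Nat.card_congr (fhomSigmaEquiv z _ hc), nat_card_sigma]

lemma key_nat {m : ℕ} (a : Fin m → ℕ) (x y : ℕ) :
    (∑ i : Fin m, a i * x ^ (i.val + 1) = ∑ i : Fin m, a i * y ^ (i.val + 1)) ↔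
      (∑ i : Fin m, a i) * x = (∑ i : Fin m, a i) * y := by
  by_cases h0 : ∀ i, a i = 0
  · simp [h0]
  · push_neg at h0
    obtain ⟨j, hj⟩ := h0
    have hA : 0 < ∑ i : Fin m, a i :=
      Finset.sum_pos' (fun i _ => Nat.zero_le _)
        ⟨j, Finset.mem_univ j, Nat.pos_of_ne_zero hj⟩
    have h1 : StrictMono (fun x : ℕ => ∑ i : Fin m, a i * x ^ (i.val + 1)) := by
      intro u v huv
      refine Finset.sum_lt_sum (fun i _ => Nat.mul_le_mul_left _
        (Nat.pow_le_pow_left huv.le _)) ⟨j, Finset.mem_univ j, ?_⟩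
      exact mul_lt_mul_of_pos_left (Nat.pow_lt_pow_left huv (Nat.succ_ne_zero _))
        (Nat.pos_of_ne_zero hj)
    have h2 : StrictMono (fun x : ℕ => (∑ i : Fin m, a i) * x) :=
      fun u v huv => mul_lt_mul_of_pos_left huv hA
    constructor
    · intro h
      rw [h1.injective h]
    · intro h
      rw [h2.injective h]

theorem poly_iso_iff_monomial_iso {m : ℕ} {γ : Fin m → Type} [∀ i, Fintype (γ i)]
    (g : ∀ i, γ i → γ i) {α β : Type} [Fintype α] [Fintype β] (f : α → α) (f' : β → β) :
    FddsIso (polyEvalNC g f) (polyEvalNC g f') ↔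
      FddsIso (Prod.map (sumCoeffMap g) f) (Prod.map (sumCoeffMap g) f') := by
  rw [fddsIso_iff_card_hom, fddsIso_iff_card_hom, allZ_iff_conn, allZ_iff_conn]
  constructor
  · intro h ζ _ z hc
    have h1 := h ζ z hc
    rw [card_hom_polyEvalNC g f z hc, card_hom_polyEvalNC g f' z hc] at h1
    rw [card_hom_monomial g f z hc, card_hom_monomial g f' z hc]
    exact (key_nat _ _ _).mp h1
  · intro h ζ _ z hc
    have h1 := h ζ z hc
    rw [card_hom_monomial g f z hc, card_hom_monomial g f' z hc] at h1
    rw [card_hom_polyEvalNC g f z hc, card_hom_polyEvalNC g f' z hc]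
    exact (key_nat _ _ _).mpr h1

end Bridge


/-- A constant-free polynomial `P = Σ_{i=1}^m A_i X^i` is injective up
to isomorphism iff the monomial `(A_1 ⊕ ⋯ ⊕ A_m) X` is injective up to isomorphism. -/
theorem polyNC_injective_iff_monomial_injective {m : ℕ} {γ : Fin m → Type}
    [∀ i, Fintype (γ i)] (g : ∀ i, γ i → γ i) :
    (∀ (α β : Type) [Fintype α] [Fintype β] (f : α → α) (f' : β → β),
      FddsIso (polyEvalNC g f) (polyEvalNC g f') → FddsIso f f')
    ↔ (∀ (α β : Type) [Fintype α] [Fintype β] (f : α → α) (f' : β → β),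
      FddsIso (Prod.map (sumCoeffMap g) f) (Prod.map (sumCoeffMap g) f') →
        FddsIso f f') := by
  
  constructor
  · intro H α β _ _ f f' hiso
    exact H α β f f' ((poly_iso_iff_monomial_iso g f f').mpr hiso)
  · intro H α β _ _ f f' hiso
    exact H α β f f' ((poly_iso_iff_monomial_iso g f f').mp hiso)
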